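/- For every positive integer m, P(3m+2, 2m+1) = 3m + 4: the maximum length of a binary sequence in which any two distinct contiguous subwords of length 3m+2 have Hamming distance at least 2m+1 is exactly 3m+4. -/

import Mathlib

/-- The contiguous length-`n` window of the sequence `s` starting at position `i`. -/
def window {α : Type*} (s : ℕ → α) (n i : ℕ) : Fin n → α := fun k => s (i + k)

/-- `s` (restricted to its first `N` entries) is a robust positioning sequence of strength `n`
and distance `d`. -/
def IsRPS {α : Type*} [DecidableEq α] (s : ℕ → α) (N n d : ℕ) : Prop :=
  ∀ i j : ℕ, i + n ≤ N → j + n ≤ N → i ≠ j →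
    d ≤ hammingDist (window s n i) (window s n j)

open Finset

lemma hd_eq {n : ℕ} (x y : Fin n → Bool) :
    hammingDist x y = ∑ k : Fin n, (if x k ≠ y k then 1 else 0) := by
  rw [hammingDist, Finset.card_filter]

lemma card_step (p : ℕ → Prop) [DecidablePred p] (n : ℕ) :
    ((range (n+1)).filter p).card
      = ((range n).filter p).card + (if p n then 1 else 0) := by
  rw [Finset.range_add_one, Finset.filter_insert]
  split
  · rw [Finset.card_insert_of_notMem (by simp)]
  · simp

lemma cnt (m r : ℕ) (hr : r < 3) :
    ((range (3*m+2)).filter (fun k => k % 3 = r)).card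
      = (if r = 2 then m else m + 1) := by
  induction m with
  | zero => interval_cases r <;> decide
  | succ m ih =>
    have h : 3*(m+1)+2 = (3*m+2)+1+1+1 := by ring
    rw [h, card_step, card_step, card_step, ih]
    have e1 : (3*m+2) % 3 = 2 := by omega
    have e2 : (3*m+2+1) % 3 = 0 := by omega
    have e3 : (3*m+2+1+1) % 3 = 1 := by omega
    rw [e1, e2, e3]
    split_ifs <;> omega

lemma count_ge (m : ℕ) (p : ℕ → Prop) [DecidablePred p] (r : ℕ) (hr : r < 3)
    (hp : ∀ k, p k ↔ k % 3 ≠ r) :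
    2*m+1 ≤ ((range (3*m+2)).filter p).card := by
  classical
  have h := Finset.card_filter_add_card_filter_not
    (s := range (3*m+2)) (p := fun k => k % 3 = r)
  have hc := cnt m r hr
  have he : (range (3*m+2)).filter p
      = (range (3*m+2)).filter (fun k => ¬ (k % 3 = r)) :=
    Finset.filter_congr (fun k _ => hp k)
  rw [he]
  rw [Finset.card_range] at h
  split_ifs at hc <;> omega

lemma hd_window (s : ℕ → Bool) (n i j : ℕ) :
    hammingDist (window s n i) (window s n j)
      = ((range n).filter (fun k => s (i+k) ≠ s (j+k))).card := by
  rw [hd_eq]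
  simp only [window]
  exact (Fin.sum_univ_eq_sum_range (fun k => if s (i+k) ≠ s (j+k) then 1 else 0) n).trans
    (Finset.card_filter _ _).symm

lemma triple {n : ℕ} (x y z : Fin n → Bool) (k0 : Fin n)
    (h1 : x k0 = y k0) (h2 : y k0 = z k0) :
    hammingDist x y + hammingDist y z + hammingDist x z + 2 ≤ 2 * n := by
  rw [hd_eq, hd_eq, hd_eq, ← Finset.sum_add_distrib, ← Finset.sum_add_distrib]
  have hb : ∀ k : Fin n,
      ((if x k ≠ y k then 1 else 0) + (if y k ≠ z k then 1 else 0))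
        + (if x k ≠ z k then (1:ℕ) else 0) ≤ 2 := by
    intro k
    cases hxk : x k <;> cases hyk : y k <;> cases hzk : z k <;> simp
  have h0 : ((if x k0 ≠ y k0 then 1 else 0) + (if y k0 ≠ z k0 then 1 else 0))
        + (if x k0 ≠ z k0 then (1:ℕ) else 0) = 0 := by
    simp [h1, h2, h1.trans h2]
  rw [← Finset.add_sum_erase _ _ (Finset.mem_univ k0), h0, zero_add]
  calc (∑ k ∈ Finset.univ.erase k0,
        (((if x k ≠ y k then 1 else 0) + (if y k ≠ z k then 1 else 0))
          + (if x k ≠ z k then (1:ℕ) else 0))) + 2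
      ≤ (∑ _k ∈ Finset.univ.erase k0, 2) + 2 := by
        gcongr with k hk; exact hb k
    _ = 2 * n := by
        rw [Finset.sum_const, Finset.card_erase_of_mem (Finset.mem_univ k0),
          Finset.card_univ, Fintype.card_fin, smul_eq_mul]
        have : 1 ≤ n := k0.pos
        omega

lemma bool5 (a b c d e : Bool)
    (h1 : ¬(a = b ∧ b = c)) (h2 : ¬(a = b ∧ b = d))
    (h3 : ¬(a = c ∧ c = d)) (h4 : ¬(b = c ∧ c = d))
    (h5 : ¬(b = c ∧ c = e)) (h6 : ¬(b = d ∧ d = e))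
    (h7 : ¬(c = d ∧ d = e)) : e = a := by
  cases a <;> cases b <;> cases c <;> cases d <;> cases e <;> simp_all

lemma bool4 (a b c d : Bool)
    (h1 : ¬(a = b ∧ b = c)) (h2 : ¬(a = b ∧ b = d))
    (h3 : ¬(a = c ∧ c = d)) (h4 : ¬(b = c ∧ c = d)) :
    (a = c ∧ b = d) ∨ (a ≠ c ∧ b ≠ d) := by
  cases a <;> cases b <;> cases c <;> cases d <;> simp_all

lemma bool_trans (x y z : Bool) (h1 : x ≠ y) (h2 : y ≠ z) : x = z := by
  cases x <;> cases y <;> cases z <;> simp_all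

/-- For every positive integer `m`, `P(3m+2, 2m+1) = 3m + 4`. -/
theorem P_3m2_2m1 (m : ℕ) (hm : 1 ≤ m) :
    (∃ s : ℕ → Bool, IsRPS s (3 * m + 4) (3 * m + 2) (2 * m + 1)) ∧
    (∀ N : ℕ, (∃ s : ℕ → Bool, IsRPS s N (3 * m + 2) (2 * m + 1)) → N ≤ 3 * m + 4) := by
  constructor
  · refine ⟨fun k => decide (k % 3 = 0), ?_⟩
    intro i j hi hj hij
    have hi' : i ≤ 2 := by omega
    have hj' : j ≤ 2 := by omega
    have key01 : 2*m+1 ≤ hammingDist (window (fun k => decide (k % 3 = 0)) (3*m+2) 0)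
        (window (fun k => decide (k % 3 = 0)) (3*m+2) 1) := by
      rw [hd_window]
      refine count_ge m _ 1 (by omega) ?_
      intro k
      simp only [ne_eq, decide_eq_decide]
      omega
    have key12 : 2*m+1 ≤ hammingDist (window (fun k => decide (k % 3 = 0)) (3*m+2) 1)
        (window (fun k => decide (k % 3 = 0)) (3*m+2) 2) := by
      rw [hd_window]
      refine count_ge m _ 0 (by omega) ?_
      intro k
      simp only [ne_eq, decide_eq_decide]
      omega
    have key02 : 2*m+1 ≤ hammingDist (window (fun k => decide (k % 3 = 0)) (3*m+2) 0)
        (window (fun k => decide (k % 3 = 0)) (3*m+2) 2) := by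
      rw [hd_window]
      refine count_ge m _ 2 (by omega) ?_
      intro k
      simp only [ne_eq, decide_eq_decide]
      omega
    interval_cases i <;> interval_cases j <;>
      first
        | exact absurd rfl hij
        | exact key01
        | exact key12
        | exact key02
        | (rw [hammingDist_comm]; first | exact key01 | exact key12 | exact key02)
  · intro N ⟨s, hs⟩
    by_contra hN
    push_neg at hN
    have hN' : 3*m+5 ≤ N := by omega
    have dist_ge : ∀ i j : ℕ, i ≤ 3 → j ≤ 3 → i ≠ j →
        2*m+1 ≤ hammingDist (window s (3*m+2) i) (window s (3*m+2) j) := by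
      intro i j hi hj hij
      have := hs i j (by omega) (by omega) hij
      omega
    have key : ∀ α β γ k : ℕ, α < β → β < γ → γ ≤ 3 → k < 3*m+2 →
        ¬(s (k+α) = s (k+β) ∧ s (k+β) = s (k+γ)) := by
      rintro α β γ k h1 h2 h3 hk ⟨e1, e2⟩
      have e1' : window s (3*m+2) α ⟨k, hk⟩ = window s (3*m+2) β ⟨k, hk⟩ := by
        show s (α + k) = s (β + k)
        rw [Nat.add_comm α, Nat.add_comm β]; exact e1
      have e2' : window s (3*m+2) β ⟨k, hk⟩ = window s (3*m+2) γ ⟨k, hk⟩ := by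
        show s (β + k) = s (γ + k)
        rw [Nat.add_comm β, Nat.add_comm γ]; exact e2
      have t := triple _ _ _ ⟨k, hk⟩ e1' e2'
      have d1 := dist_ge α β (by omega) (by omega) (by omega)
      have d2 := dist_ge β γ (by omega) (by omega) (by omega)
      have d3 := dist_ge α γ (by omega) (by omega) (by omega)
      omega
    have per : ∀ k : ℕ, k ≤ 3*m → s (k+4) = s k := by
      intro k hk
      have h1 := key 0 1 2 k (by omega) (by omega) (by omega) (by omega)
      have h2 := key 0 1 3 k (by omega) (by omega) (by omega) (by omega)
      have h3 := key 0 2 3 k (by omega) (by omega) (by omega) (by omega)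
      have h4 := key 1 2 3 k (by omega) (by omega) (by omega) (by omega)
      have h5 := key 0 1 3 (k+1) (by omega) (by omega) (by omega) (by omega)
      have h6 := key 0 2 3 (k+1) (by omega) (by omega) (by omega) (by omega)
      have h7 := key 1 2 3 (k+1) (by omega) (by omega) (by omega) (by omega)
      simp only [Nat.add_zero, show k+1+0 = k+1 by omega, show k+1+1 = k+2 by omega,
        show k+1+2 = k+3 by omega, show k+1+3 = k+4 by omega] at h1 h2 h3 h4 h5 h6 h7
      exact bool5 (s k) (s (k+1)) (s (k+2)) (s (k+3)) (s (k+4)) h1 h2 h3 h4 h5 h6 h7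
    have mod4 : ∀ k : ℕ, k ≤ 3*m+4 → s k = s (k % 4) := by
      intro k
      induction k using Nat.strong_induction_on with
      | _ k ih =>
        intro hk
        by_cases hk4 : k < 4
        · rw [Nat.mod_eq_of_lt hk4]
        · push_neg at hk4
          obtain ⟨j, rfl⟩ : ∃ j, k = j + 4 := ⟨k - 4, by omega⟩
          rw [per j (by omega), ih j (by omega) (by omega)]
          congr 1
          omega
    have h1 := key 0 1 2 0 (by omega) (by omega) (by omega) (by omega)
    have h2 := key 0 1 3 0 (by omega) (by omega) (by omega) (by omega)
    have h3 := key 0 2 3 0 (by omega) (by omega) (by omega) (by omega)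
    have h4 := key 1 2 3 0 (by omega) (by omega) (by omega) (by omega)
    simp only [Nat.zero_add] at h1 h2 h3 h4
    rcases bool4 (s 0) (s 1) (s 2) (s 3) h1 h2 h3 h4 with ⟨hA1, hA2⟩ | ⟨hB1, hB2⟩
    · -- Case A : windows 0 and 2 coincide
      have eqA : ∀ i : ℕ, i ≤ 3*m+1 → s (i+2) = s i := by
        intro i hi
        rw [mod4 (i+2) (by omega), mod4 i (by omega)]
        have hc : (i+2) % 4 = (i % 4 + 2) % 4 := by omega
        rw [hc]
        have h4i : i % 4 = 0 ∨ i % 4 = 1 ∨ i % 4 = 2 ∨ i % 4 = 3 := by omega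
        rcases h4i with h | h | h | h <;> rw [h]
        · exact hA1.symm
        · exact hA2.symm
        · exact hA1
        · exact hA2
      have hw : window s (3*m+2) 2 = window s (3*m+2) 0 := by
        funext k
        show s (2 + (k : ℕ)) = s (0 + (k : ℕ))
        rw [Nat.zero_add, Nat.add_comm]
        exact eqA k (by omega)
      have := hs 0 2 (by omega) (by omega) (by omega)
      rw [hw, hammingDist_self] at this
      omega
    · -- Case B : windows 0 and 2 differ everywhere
      have neB : ∀ i : ℕ, i ≤ 3*m+1 → s (i+2) ≠ s i := by
        intro i hi
        rw [mod4 (i+2) (by omega), mod4 i (by omega)]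
        have hc : (i+2) % 4 = (i % 4 + 2) % 4 := by omega
        rw [hc]
        have h4i : i % 4 = 0 ∨ i % 4 = 1 ∨ i % 4 = 2 ∨ i % 4 = 3 := by omega
        rcases h4i with h | h | h | h <;> rw [h]
        · exact fun h' => hB1 h'.symm
        · exact fun h' => hB2 h'.symm
        · exact hB1
        · exact hB2
      have hdisj : Disjoint
          (Finset.univ.filter fun k : Fin (3*m+2) =>
            window s (3*m+2) 0 k ≠ window s (3*m+2) 1 k)
          (Finset.univ.filter fun k : Fin (3*m+2) =>
            window s (3*m+2) 1 k ≠ window s (3*m+2) 2 k) := by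
        rw [Finset.disjoint_left]
        intro k hk1 hk2
        simp only [Finset.mem_filter, Finset.mem_univ, true_and] at hk1 hk2
        have e0 : window s (3*m+2) 0 k = s (k : ℕ) := by
          show s (0 + (k : ℕ)) = _; rw [Nat.zero_add]
        have e2 : window s (3*m+2) 2 k = s ((k : ℕ) + 2) := by
          show s (2 + (k : ℕ)) = _; rw [Nat.add_comm]
        rw [e0] at hk1
        rw [e2] at hk2
        exact neB k (by omega) (bool_trans _ _ _ hk1 hk2).symm
      have hsum : hammingDist (window s (3*m+2) 0) (window s (3*m+2) 1)
          + hammingDist (window s (3*m+2) 1) (window s (3*m+2) 2) ≤ 3*m+2 := by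
        rw [hammingDist, hammingDist, ← Finset.card_union_of_disjoint hdisj]
        calc _ ≤ Fintype.card (Fin (3*m+2)) := Finset.card_le_univ _
          _ = 3*m+2 := Fintype.card_fin _
      have d01 := dist_ge 0 1 (by omega) (by omega) (by omega)
      have d12 := dist_ge 1 2 (by omega) (by omega) (by omega)
      omega
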